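/- Let g and n be natural numbers with g ≥ 1 and n ≥ 1. In the field ℚ(t) of rational functions over ℚ, define P₁ = (1+t)^{2g}/(1−t²), P₂ = (1+t²)^{n−1}(1+t)^{2g}(1+t³)^{2g}/(1−t²)³, P₃ = (1+2t²+2t⁴+t⁶)^{n−1}(1+t)^{2g}(1+t³)^{2g}(1+t⁵)^{2g}/((1−t²)⁴(1−t⁴)). Then (1−t²)·( P₃ + (1+t²+t⁴)^n·t^{4g−2}·(1+t²)/(t⁶−1)·P₁·P₂ + (1+2t²+2t⁴+t⁶)^n·t^{6g−2}/(t⁴−1)²·P₁³ ) = (1+t)^{2g}(1+2t²+2t⁴+t⁶)^{n−1} · [ (1+t³)^{2g}(1+t⁵)^{2g} + (1+t)^{4g}(1+t²+t⁴)t^{6g−2} − (1+t)^{2g}(1+t³)^{2g}(1+t²)²t^{4g−2} ] / ((1−t²)³(1−t⁴)). -/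

import Mathlib

set_option maxHeartbeats 1000000 in
open RatFunc in
/-- The rational function identity behind the closed formula for the
Poincaré polynomial of the moduli space of stable rank 3 parabolic bundles
with full flags at `n` points on a genus `g` curve. -/
theorem holla_rank_three_simplification (g n : ℕ) (hg : 1 ≤ g) (hn : 1 ≤ n) :
    (fun (t : RatFunc ℚ) =>
      (fun (P₁ P₂ P₃ : RatFunc ℚ) =>
        (1 - t ^ 2) *
          (P₃
            + (1 + t ^ 2 + t ^ 4) ^ n * t ^ (4 * g - 2) * (1 + t ^ 2) / (t ^ 6 - 1)
                * P₁ * P₂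
            + (1 + 2 * t ^ 2 + 2 * t ^ 4 + t ^ 6) ^ n * t ^ (6 * g - 2) / (t ^ 4 - 1) ^ 2
                * P₁ ^ 3)
        = (1 + t) ^ (2 * g) * (1 + 2 * t ^ 2 + 2 * t ^ 4 + t ^ 6) ^ (n - 1)
            * ((1 + t ^ 3) ^ (2 * g) * (1 + t ^ 5) ^ (2 * g)
                + (1 + t) ^ (4 * g) * (1 + t ^ 2 + t ^ 4) * t ^ (6 * g - 2)
                - (1 + t) ^ (2 * g) * (1 + t ^ 3) ^ (2 * g) * (1 + t ^ 2) ^ 2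
                    * t ^ (4 * g - 2))
            / ((1 - t ^ 2) ^ 3 * (1 - t ^ 4)))
      ((1 + t) ^ (2 * g) / (1 - t ^ 2))
      ((1 + t ^ 2) ^ (n - 1) * (1 + t) ^ (2 * g) * (1 + t ^ 3) ^ (2 * g)
        / (1 - t ^ 2) ^ 3)
      ((1 + 2 * t ^ 2 + 2 * t ^ 4 + t ^ 6) ^ (n - 1) * (1 + t) ^ (2 * g)
          * (1 + t ^ 3) ^ (2 * g) * (1 + t ^ 5) ^ (2 * g)
        / ((1 - t ^ 2) ^ 4 * (1 - t ^ 4))))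
    RatFunc.X := by
  obtain ⟨a, rfl⟩ : ∃ a, g = a + 1 := ⟨g - 1, by omega⟩
  obtain ⟨b, rfl⟩ : ∃ b, n = b + 1 := ⟨n - 1, by omega⟩
  have key : ∀ p : Polynomial ℚ, p ≠ 0 →
      algebraMap (Polynomial ℚ) (RatFunc ℚ) p ≠ 0 := fun p hp =>
    RatFunc.algebraMap_ne_zero hp
  have h1 : (1 - (RatFunc.X : RatFunc ℚ) ^ 2) ≠ 0 := by
    have := key (1 - Polynomial.X ^ 2) (by
      intro h
      have := congrArg (Polynomial.eval 2) h
      norm_num at this)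
    simpa using this
  have h6 : ((RatFunc.X : RatFunc ℚ) ^ 6 - 1) ≠ 0 := by
    have := key (Polynomial.X ^ 6 - 1) (by
      intro h
      have := congrArg (Polynomial.eval 2) h
      norm_num at this)
    simpa using this
  have h4 : ((RatFunc.X : RatFunc ℚ) ^ 4 - 1) ≠ 0 := by
    have := key (Polynomial.X ^ 4 - 1) (by
      intro h
      have := congrArg (Polynomial.eval 2) h
      norm_num at this)
    simpa using this
  have h4' : (1 - (RatFunc.X : RatFunc ℚ) ^ 4) ≠ 0 := by
    intro h; apply h4; linear_combination -h
  have e1 : 4 * (a + 1) - 2 = 4 * a + 2 := by omega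
  have e2 : 6 * (a + 1) - 2 = 6 * a + 4 := by omega
  have e3 : (b + 1) - 1 = b := by omega
  rw [e1, e2, e3,
    show (1 + 2 * (RatFunc.X : RatFunc ℚ) ^ 2 + 2 * RatFunc.X ^ 4 + RatFunc.X ^ 6)
      = (1 + RatFunc.X ^ 2) * (1 + RatFunc.X ^ 2 + RatFunc.X ^ 4) from by ring]
  simp only [mul_pow]
  field_simp
  ring
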